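/- There is a bounded uniformly discrete metric d on ℕ (with all nonzero distances in [1/2,1]) and points ξ, η in the Samuel (uniform) compactification of (ℕ,d) such that for every r ∈ [1/2,1] there exists ζ in the Stone–Čech compactification of \widetilde{ℕ} with coordinate pair (ξ,η) and d(ζ) = r, where d denotes the continuous extension of the distance function; consequently ‖Φ*δ_ζ‖ = 1/(2r) takes every value in [1/2,1]. -/

import Mathlib

open scoped NNReal

noncomputable section SamuelAux

namespace SamuelAux

open Filter Set

/-! ### Combinatorial core -/

def P (p : ℕ) : ℕ := Nat.nth Nat.Prime p

lemma P_strictMono : StrictMono P := Nat.nth_strictMono Nat.infinite_setOf_prime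

lemma P_prime (p : ℕ) : (P p).Prime := Nat.nth_mem_of_infinite Nat.infinite_setOf_prime p

lemma P_ge (p : ℕ) : p ≤ P p := P_strictMono.le_apply

lemma P_inj : Function.Injective P := P_strictMono.injective

def psi (p q : ℕ) : ℕ := q.factorization (P p)

def Small (S : Set ℕ) : Prop := ∃ n, ∀ a ∈ S, ∀ b ∈ S, psi a b ≠ n

lemma lemA (l : List (Set ℕ)) (hl : ∀ S ∈ l, Small S) :
    ∃ c D : ℕ, c ≠ 0 ∧ ∀ S ∈ l, ¬BddAbove S →
      ∃ p ∈ S, p ≤ D ∧ ∀ a ∈ S, ∀ b ∈ S, psi a b ≠ c.factorization (P p) := by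
  induction l with
  | nil => exact ⟨1, 0, one_ne_zero, by simp⟩
  | cons S l ih =>
    obtain ⟨c, D, hc0, hIH⟩ := ih (fun S' hS' => hl S' (List.mem_cons_of_mem _ hS'))
    by_cases hB : BddAbove S
    · refine ⟨c, D, hc0, ?_⟩
      intro S' hS' hnb
      rcases List.mem_cons.1 hS' with rfl | h
      · exact absurd hB hnb
      · exact hIH S' h hnb
    · obtain ⟨n, hn⟩ := hl S List.mem_cons_self
      obtain ⟨p, hpS, hp⟩ : ∃ p ∈ S, max c D < p := by
        rw [not_bddAbove_iff] at hB
        obtain ⟨x, hx, hlt⟩ := hB (max c D)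
        exact ⟨x, hx, hlt⟩
      have hcp : c < p := lt_of_le_of_lt (le_max_left _ _) hp
      have hDp : D < p := lt_of_le_of_lt (le_max_right _ _) hp
      have hPpow : (P p : ℕ) ^ n ≠ 0 := pow_ne_zero _ (P_prime p).pos.ne'
      have hfact : ∀ m : ℕ, (c * P p ^ n).factorization (P m) =
          c.factorization (P m) + (Finsupp.single (P p) n) (P m) := by
        intro m
        rw [Nat.factorization_mul hc0 hPpow, (P_prime p).factorization_pow]
        rfl
      have hnotdvd : ¬ (P p ∣ c) := by
        intro hdvd
        have := Nat.le_of_dvd (Nat.pos_of_ne_zero hc0) hdvd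
        have := P_ge p
        omega
      refine ⟨c * P p ^ n, max D p, Nat.mul_ne_zero hc0 hPpow, ?_⟩
      intro S' hS' hnb
      rcases List.mem_cons.1 hS' with rfl | h
      · refine ⟨p, hpS, le_max_right _ _, ?_⟩
        have : (c * P p ^ n).factorization (P p) = n := by
          rw [hfact p, Nat.factorization_eq_zero_of_not_dvd hnotdvd, Finsupp.single_eq_same, zero_add]
        rw [this]
        exact hn
      · obtain ⟨p', hp'S, hp'D, hp'⟩ := hIH S' h hnb
        refine ⟨p', hp'S, le_trans hp'D (le_max_left _ _), ?_⟩
        have hne : P p ≠ P p' := P_inj.ne (by omega)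
        have : (c * P p ^ n).factorization (P p') = c.factorization (P p') := by
          rw [hfact p', Finsupp.single_eq_of_ne hne.symm, add_zero]
        rw [this]
        exact hp'

lemma boundList (l : List (Set ℕ)) : ∃ B : ℕ, ∀ S ∈ l, BddAbove S → ∀ x ∈ S, x ≤ B := by
  induction l with
  | nil => exact ⟨0, by simp⟩
  | cons S l ih =>
    obtain ⟨B, hB⟩ := ih
    by_cases h : BddAbove S
    · obtain ⟨b, hb⟩ := h
      refine ⟨max b B, ?_⟩
      intro S' hS' hS'b x hx
      rcases List.mem_cons.1 hS' with rfl | hmem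
      · exact le_trans (hb hx) (le_max_left _ _)
      · exact le_trans (hB S' hmem hS'b x hx) (le_max_right _ _)
    · refine ⟨B, ?_⟩
      intro S' hS' hS'b x hx
      rcases List.mem_cons.1 hS' with rfl | hmem
      · exact absurd hS'b h
      · exact hB S' hmem hS'b x hx

lemma cover (l : List (Set ℕ)) (hl : ∀ S ∈ l, Small S) : ∃ x, ∀ S ∈ l, x ∉ S := by
  obtain ⟨c, D, hc0, hA⟩ := lemA l hl
  obtain ⟨B, hB⟩ := boundList l
  set K := max B (max c D) + 1 with hK
  refine ⟨c * P K, ?_⟩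
  intro S hS hmem
  by_cases hb : BddAbove S
  · have h1 : c * P K ≤ B := hB S hS hb _ hmem
    have h2 : K ≤ P K := P_ge K
    have h3 : P K ≤ c * P K := Nat.le_mul_of_pos_left _ (Nat.pos_of_ne_zero hc0)
    omega
  · obtain ⟨p, hpS, hpD, hnp⟩ := hA S hS hb
    apply hnp p hpS (c * P K) hmem
    have hne : P K ≠ P p := P_inj.ne (by omega)
    unfold psi
    rw [Nat.factorization_mul hc0 (P_prime K).pos.ne', Finsupp.add_apply,
      (P_prime K).factorization, Finsupp.single_eq_of_ne hne.symm, add_zero]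

/-! ### The ultrafilter -/

def g0 : Set (Set ℕ) := {C | Small Cᶜ}

lemma generate_neBot : (Filter.generate g0).NeBot := by
  rw [Filter.neBot_iff]
  intro hbot
  have h0 : (∅ : Set ℕ) ∈ Filter.generate g0 := by rw [hbot]; exact Filter.mem_bot
  rw [Filter.mem_generate_iff] at h0
  obtain ⟨t, htg, htfin, hsub⟩ := h0
  have hl : ∀ S ∈ (htfin.toFinset.toList.map (fun C => Cᶜ)), Small S := by
    intro S hS
    rw [List.mem_map] at hS
    obtain ⟨C, hC, rfl⟩ := hS
    rw [Finset.mem_toList, Set.Finite.mem_toFinset] at hC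
    exact htg hC
  obtain ⟨x, hx⟩ := cover _ hl
  have hxt : x ∈ ⋂₀ t := by
    intro C hC
    have : Cᶜ ∈ htfin.toFinset.toList.map (fun C => Cᶜ) := by
      rw [List.mem_map]
      exact ⟨C, by rw [Finset.mem_toList, Set.Finite.mem_toFinset]; exact hC, rfl⟩
    have := hx _ this
    simpa using this
  exact hsub hxt

def U : Ultrafilter ℕ := @Ultrafilter.of _ (Filter.generate g0) generate_neBot

lemma U_large {A : Set ℕ} (hA : A ∈ U) (n : ℕ) : ∃ a ∈ A, ∃ b ∈ A, psi a b = n := by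
  by_contra h
  push_neg at h
  have hsmall : Aᶜ ∈ g0 := by
    show Small Aᶜᶜ
    rw [compl_compl]
    exact ⟨n, h⟩
  have hle : (U : Filter ℕ) ≤ Filter.generate g0 :=
    @Ultrafilter.of_le _ (Filter.generate g0) generate_neBot
  have : Aᶜ ∈ U := hle (Filter.mem_generate_of_mem hsmall)
  exact (Ultrafilter.compl_mem_iff_notMem.1 this) hA

/-! ### The values -/

def val (n : ℕ) : ℝ := max (1/2) (min 1 ((Denumerable.ofNat ℚ n : ℚ) : ℝ))

lemma val_mem (n : ℕ) : val n ∈ Set.Icc (1/2 : ℝ) 1 :=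
  ⟨le_max_left _ _, max_le (by norm_num) (min_le_left _ _)⟩

set_option maxHeartbeats 1000000 in
lemma val_dense {r : ℝ} (hr : r ∈ Set.Icc (1/2:ℝ) 1) : r ∈ closure (Set.range val) := by
  obtain ⟨hr1, hr2⟩ := hr
  rw [Metric.mem_closure_iff]
  intro ε hε
  obtain ⟨q, hq1, hq2⟩ := exists_rat_btwn (show r - ε < r by linarith)
  obtain ⟨n, hofnat⟩ : ∃ n, Denumerable.ofNat ℚ n = q := ⟨_, Denumerable.ofNat_encode q⟩
  refine ⟨val n, ⟨_, rfl⟩, ?_⟩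
  rw [Real.dist_eq]
  unfold val
  rw [hofnat]
  have hq1' : r - ε < (q:ℝ) := hq1
  have hq2' : (q:ℝ) < r := hq2
  rcases le_or_gt (1/2 : ℝ) (q:ℝ) with h | h
  · rw [min_eq_right (le_of_lt (lt_of_lt_of_le hq2' hr2)), max_eq_right h]
    rw [abs_sub_lt_iff]
    constructor <;> linarith
  · rw [min_eq_right (le_of_lt (lt_of_lt_of_le hq2' hr2)), max_eq_left (le_of_lt h)]
    rw [abs_sub_lt_iff]
    constructor <;> linarith

/-! ### The metric -/

def dd (x y : ℕ) : ℝ :=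
  if x = y then 0
  else if x % 2 = 0 ∧ y % 2 = 1 then val (psi (x/2) (y/2))
  else if x % 2 = 1 ∧ y % 2 = 0 then val (psi (y/2) (x/2))
  else 1/2

lemma dd_self (x : ℕ) : dd x x = 0 := if_pos rfl

lemma dd_mem {x y : ℕ} (h : x ≠ y) : dd x y ∈ Set.Icc (1/2:ℝ) 1 := by
  unfold dd
  rw [if_neg h]
  split_ifs with h1 h2
  · exact val_mem _
  · exact val_mem _
  · exact ⟨le_refl _, by norm_num⟩

lemma dd_nonneg (x y : ℕ) : 0 ≤ dd x y := by
  by_cases h : x = y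
  · subst h; rw [dd_self]
  · have := (dd_mem h).1; linarith

lemma dd_comm (x y : ℕ) : dd x y = dd y x := by
  unfold dd
  by_cases h : x = y
  · subst h; simp
  · rw [if_neg h, if_neg (Ne.symm h)]
    rcases Nat.mod_two_eq_zero_or_one x with hx | hx <;>
      rcases Nat.mod_two_eq_zero_or_one y with hy | hy <;>
      simp [hx, hy]

lemma dd_triangle (x y z : ℕ) : dd x z ≤ dd x y + dd y z := by
  by_cases hxz : x = z
  · subst hxz
    rw [dd_self]
    have := dd_nonneg x y; have := dd_nonneg y x
    rw [dd_comm y x] at *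
    linarith [dd_nonneg x y]
  by_cases hxy : x = y
  · subst hxy; rw [dd_self]; linarith [le_refl (dd x z)]
  by_cases hyz : y = z
  · subst hyz; rw [dd_self]; linarith [le_refl (dd x y)]
  · have h1 := (dd_mem hxz).2
    have h2 := (dd_mem hxy).1
    have h3 := (dd_mem hyz).1
    linarith

lemma dd_pair (p q : ℕ) : dd (2*p) (2*q+1) = val (psi p q) := by
  unfold dd
  rw [if_neg (by omega), if_pos ⟨by omega, by omega⟩]
  have h1 : (2*p)/2 = p := by omega
  have h2 : (2*q+1)/2 = q := by omega
  rw [h1, h2]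


/-! ### Stone-Čech machinery -/

abbrev TT : Type := {p : ℕ × ℕ // p.1 ≠ p.2}

def pr1 : StoneCech TT → StoneCech ℕ :=
  stoneCechExtend (show Continuous (fun t : TT => stoneCechUnit t.val.1) from
    continuous_of_discreteTopology)

def pr2 : StoneCech TT → StoneCech ℕ :=
  stoneCechExtend (show Continuous (fun t : TT => stoneCechUnit t.val.2) from
    continuous_of_discreteTopology)

lemma continuous_pr1 : Continuous pr1 := continuous_stoneCechExtend _

lemma continuous_pr2 : Continuous pr2 := continuous_stoneCechExtend _

lemma pr1_unit (t : TT) : pr1 (stoneCechUnit t) = stoneCechUnit t.val.1 :=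
  congrFun (stoneCechExtend_extends _) t

lemma pr2_unit (t : TT) : pr2 (stoneCechUnit t) = stoneCechUnit t.val.2 :=
  congrFun (stoneCechExtend_extends _) t

def ddI (t : TT) : Set.Icc (1/2:ℝ) 1 := ⟨dd t.val.1 t.val.2, dd_mem t.prop⟩

def DDI : StoneCech TT → Set.Icc (1/2:ℝ) 1 :=
  stoneCechExtend (show Continuous ddI from continuous_of_discreteTopology)

def DD (z : StoneCech TT) : ℝ := (DDI z : ℝ)

lemma continuous_DD : Continuous DD := continuous_subtype_val.comp (continuous_stoneCechExtend _)

lemma DD_unit (t : TT) : DD (stoneCechUnit t) = dd t.val.1 t.val.2 := by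
  have h := congrFun (stoneCechExtend_extends
    (show Continuous ddI from continuous_of_discreteTopology)) t
  unfold DD DDI
  rw [show (stoneCechExtend (show Continuous ddI from continuous_of_discreteTopology))
      (stoneCechUnit t) = ddI t from h]
  rfl

lemma DD_mem (z : StoneCech TT) : DD z ∈ Set.Icc (1/2:ℝ) 1 := (DDI z).prop

lemma DD_pos (z : StoneCech TT) : 0 < DD z := lt_of_lt_of_le (by norm_num) (DD_mem z).1

def limU {X : Type} [TopologicalSpace X] [CompactSpace X] (u : Ultrafilter X) : X :=
  (isCompact_univ.ultrafilter_le_nhds u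
    (by rw [Filter.principal_univ]; exact le_top)).choose

lemma limU_spec {X : Type} [TopologicalSpace X] [CompactSpace X] (u : Ultrafilter X) :
    ↑u ≤ nhds (limU u) :=
  (isCompact_univ.ultrafilter_le_nhds u
    (by rw [Filter.principal_univ]; exact le_top)).choose_spec.2

def xi : StoneCech ℕ := limU (U.map (fun p : ℕ => stoneCechUnit (2*p)))

def eta : StoneCech ℕ := limU (U.map (fun p : ℕ => stoneCechUnit (2*p+1)))

lemma xi_spec : Filter.Tendsto (fun p : ℕ => stoneCechUnit (2*p)) U (nhds xi) := by
  have := limU_spec (U.map (fun p : ℕ => stoneCechUnit (2*p)))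
  rwa [Ultrafilter.coe_map] at this

lemma eta_spec : Filter.Tendsto (fun p : ℕ => stoneCechUnit (2*p+1)) U (nhds eta) := by
  have := limU_spec (U.map (fun p : ℕ => stoneCechUnit (2*p+1)))
  rwa [Ultrafilter.coe_map] at this

def WSet (A : Set ℕ) (n : ℕ) : Set TT :=
  {t | ∃ p ∈ A, ∃ q ∈ A, psi p q = n ∧ t.val = (2*p, 2*q+1)}

def gW (n : ℕ) : Set (Set TT) := {W | ∃ A ∈ U, W = WSet A n}

lemma gW_neBot (n : ℕ) : (Filter.generate (gW n)).NeBot := by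
  rw [Filter.neBot_iff]
  intro hbot
  have h0 : (∅ : Set TT) ∈ Filter.generate (gW n) := by rw [hbot]; exact Filter.mem_bot
  rw [Filter.mem_generate_iff] at h0
  obtain ⟨t, htg, htfin, hsub⟩ := h0
  choose! A hAU hAW using fun W (hW : W ∈ t) => htg hW
  have hAstar : (⋂ W ∈ t, A W) ∈ U := by
    rw [← Ultrafilter.mem_coe]
    exact (Filter.biInter_mem htfin).mpr (fun W hW => hAU W hW)
  obtain ⟨a, ha, b, hb, hab⟩ := U_large hAstar n
  have hmem : (⟨(2*a, 2*b+1), by show 2*a ≠ 2*b+1; omega⟩ : TT) ∈ ⋂₀ t := by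
    intro W hW
    rw [hAW W hW]
    exact ⟨a, Set.mem_iInter₂.1 ha W hW, b, Set.mem_iInter₂.1 hb W hW, hab, rfl⟩
  exact hsub hmem

def Zn (n : ℕ) : Ultrafilter TT := @Ultrafilter.of _ (Filter.generate (gW n)) (gW_neBot n)

lemma WSet_mem {A : Set ℕ} (hA : A ∈ U) (n : ℕ) : WSet A n ∈ Zn n :=
  (@Ultrafilter.of_le _ (Filter.generate (gW n)) (gW_neBot n))
    (Filter.mem_generate_of_mem ⟨A, hA, rfl⟩)

def zeta (n : ℕ) : StoneCech TT := limU ((Zn n).map stoneCechUnit)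

lemma zeta_spec (n : ℕ) : Filter.Tendsto stoneCechUnit (Zn n) (nhds (zeta n)) := by
  have := limU_spec ((Zn n).map stoneCechUnit)
  rwa [Ultrafilter.coe_map] at this

lemma map_fst_Zn (n : ℕ) :
    (Zn n).map (fun t : TT => stoneCechUnit t.val.1) = U.map (fun p : ℕ => stoneCechUnit (2*p)) := by
  apply Ultrafilter.coe_le_coe.1
  intro s hs
  rw [Ultrafilter.mem_coe, Ultrafilter.mem_map] at hs ⊢
  rw [← Ultrafilter.mem_coe]
  refine Filter.mem_of_superset ((Ultrafilter.mem_coe).2 (WSet_mem hs n)) ?_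
  rintro t ⟨p, hp, q, hq, hpsi, hval⟩
  have h1 : t.val.1 = 2*p := by rw [hval]
  show stoneCechUnit t.val.1 ∈ s
  rw [h1]
  exact hp

lemma map_snd_Zn (n : ℕ) :
    (Zn n).map (fun t : TT => stoneCechUnit t.val.2) = U.map (fun p : ℕ => stoneCechUnit (2*p+1)) := by
  apply Ultrafilter.coe_le_coe.1
  intro s hs
  rw [Ultrafilter.mem_coe, Ultrafilter.mem_map] at hs ⊢
  rw [← Ultrafilter.mem_coe]
  refine Filter.mem_of_superset ((Ultrafilter.mem_coe).2 (WSet_mem hs n)) ?_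
  rintro t ⟨p, hp, q, hq, hpsi, hval⟩
  have h1 : t.val.2 = 2*q+1 := by rw [hval]
  show stoneCechUnit t.val.2 ∈ s
  rw [h1]
  exact hq

lemma pr1_zeta (n : ℕ) : pr1 (zeta n) = xi := by
  have h1 : Filter.Tendsto (fun t : TT => stoneCechUnit t.val.1) (Zn n) (nhds (pr1 (zeta n))) := by
    have h2 := (continuous_pr1.tendsto (zeta n)).comp (zeta_spec n)
    exact h2.congr (fun t => pr1_unit t)
  have h3 : Filter.Tendsto (fun t : TT => stoneCechUnit t.val.1) (Zn n) (nhds xi) := by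
    have hmap : Filter.map (fun t : TT => stoneCechUnit t.val.1) ↑(Zn n) ≤ nhds xi := by
      rw [← Ultrafilter.coe_map, map_fst_Zn n, Ultrafilter.coe_map]
      exact xi_spec
    exact hmap
  exact tendsto_nhds_unique h1 h3

lemma pr2_zeta (n : ℕ) : pr2 (zeta n) = eta := by
  have h1 : Filter.Tendsto (fun t : TT => stoneCechUnit t.val.2) (Zn n) (nhds (pr2 (zeta n))) := by
    have h2 := (continuous_pr2.tendsto (zeta n)).comp (zeta_spec n)
    exact h2.congr (fun t => pr2_unit t)
  have h3 : Filter.Tendsto (fun t : TT => stoneCechUnit t.val.2) (Zn n) (nhds eta) := by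
    have hmap : Filter.map (fun t : TT => stoneCechUnit t.val.2) ↑(Zn n) ≤ nhds eta := by
      rw [← Ultrafilter.coe_map, map_snd_Zn n, Ultrafilter.coe_map]
      exact eta_spec
    exact hmap
  exact tendsto_nhds_unique h1 h3

lemma DD_zeta (n : ℕ) : DD (zeta n) = val n := by
  have h1 : Filter.Tendsto (fun t : TT => DD (stoneCechUnit t)) (Zn n) (nhds (DD (zeta n))) :=
    (continuous_DD.tendsto (zeta n)).comp (zeta_spec n)
  have hev : (fun _ : TT => val n) =ᶠ[(Zn n : Filter TT)] (fun t : TT => DD (stoneCechUnit t)) := by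
    apply Filter.eventually_of_mem ((Ultrafilter.mem_coe).2 (WSet_mem
      (show (Set.univ : Set ℕ) ∈ U from Filter.univ_mem) n))
    rintro t ⟨p, _, q, _, hpsi, hval⟩
    show val n = DD (stoneCechUnit t)
    rw [DD_unit t]
    have h1' : t.val.1 = 2*p := by rw [hval]
    have h2' : t.val.2 = 2*q+1 := by rw [hval]
    rw [h1', h2', dd_pair, hpsi]
  have h2 : Filter.Tendsto (fun t : TT => DD (stoneCechUnit t)) (Zn n) (nhds (val n)) :=
    (tendsto_const_nhds).congr' hev
  exact tendsto_nhds_unique h1 h2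

lemma G_xi {G : StoneCech ℕ → ℝ} (hG : Continuous G) {c : ℝ}
    (h : ∀ p : ℕ, G (stoneCechUnit (2*p)) = c) : G xi = c := by
  have h1 : Filter.Tendsto (fun p : ℕ => G (stoneCechUnit (2*p))) U (nhds (G xi)) :=
    (hG.tendsto xi).comp xi_spec
  have h2 : Filter.Tendsto (fun p : ℕ => G (stoneCechUnit (2*p))) U (nhds c) := by
    simp only [h]; exact tendsto_const_nhds
  exact tendsto_nhds_unique h1 h2

lemma G_eta {G : StoneCech ℕ → ℝ} (hG : Continuous G) {c : ℝ}
    (h : ∀ p : ℕ, G (stoneCechUnit (2*p+1)) = c) : G eta = c := by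
  have h1 : Filter.Tendsto (fun p : ℕ => G (stoneCechUnit (2*p+1))) U (nhds (G eta)) :=
    (hG.tendsto eta).comp eta_spec
  have h2 : Filter.Tendsto (fun p : ℕ => G (stoneCechUnit (2*p+1))) U (nhds c) := by
    simp only [h]; exact tendsto_const_nhds
  exact tendsto_nhds_unique h1 h2

lemma fiber {r : ℝ} (hr : r ∈ Set.Icc (1/2:ℝ) 1) :
    ∃ ζ : StoneCech TT, pr1 ζ = xi ∧ pr2 ζ = eta ∧ DD ζ = r := by
  set K : Set (StoneCech TT) := {z | pr1 z = xi ∧ pr2 z = eta} with hKdef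
  have hKc : IsClosed K :=
    (isClosed_eq continuous_pr1 continuous_const).inter (isClosed_eq continuous_pr2 continuous_const)
  have hK : IsCompact K := hKc.isCompact
  have himg : IsClosed (DD '' K) := (hK.image continuous_DD).isClosed
  have hsub : Set.range val ⊆ DD '' K := by
    rintro _ ⟨n, rfl⟩
    exact ⟨zeta n, ⟨pr1_zeta n, pr2_zeta n⟩, DD_zeta n⟩
  have hrK : r ∈ DD '' K := (closure_minimal hsub himg) (val_dense hr)
  obtain ⟨ζ, hζK, hζD⟩ := hrK
  exact ⟨ζ, hζK.1, hζK.2, hζD⟩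

def ext01 (f : ℕ → ℝ) (hf : ∀ x, f x ∈ Set.Icc (-1:ℝ) 1) : StoneCech ℕ → ℝ :=
  fun z => ((stoneCechExtend (show Continuous (fun x : ℕ => (⟨f x, hf x⟩ : Set.Icc (-1:ℝ) 1))
    from continuous_of_discreteTopology) z : Set.Icc (-1:ℝ) 1) : ℝ)

lemma continuous_ext01 (f : ℕ → ℝ) (hf : ∀ x, f x ∈ Set.Icc (-1:ℝ) 1) :
    Continuous (ext01 f hf) := continuous_subtype_val.comp (continuous_stoneCechExtend _)

lemma ext01_unit (f : ℕ → ℝ) (hf : ∀ x, f x ∈ Set.Icc (-1:ℝ) 1) (x : ℕ) :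
    ext01 f hf (stoneCechUnit x) = f x := by
  have h := congrFun (stoneCechExtend_extends
    (show Continuous (fun x : ℕ => (⟨f x, hf x⟩ : Set.Icc (-1:ℝ) 1))
      from continuous_of_discreteTopology)) x
  unfold ext01
  rw [show (stoneCechExtend (show Continuous (fun x : ℕ => (⟨f x, hf x⟩ : Set.Icc (-1:ℝ) 1))
      from continuous_of_discreteTopology)) (stoneCechUnit x) = ⟨f x, hf x⟩ from h]

end SamuelAux

end SamuelAux

open SamuelAux in
theorem exists_metric_on_nat_with_all_intermediate_points :
    ∃ d : ℕ → ℕ → ℝ,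
      (∀ x, d x x = 0) ∧
      (∀ x y, d x y = d y x) ∧
      (∀ x y z, d x z ≤ d x y + d y z) ∧
      (∀ x y, x ≠ y → d x y ∈ Set.Icc (1/2 : ℝ) 1) ∧
      ∃ (p₁ p₂ : StoneCech {p : ℕ × ℕ // p.1 ≠ p.2} → StoneCech ℕ)
        (D : StoneCech {p : ℕ × ℕ // p.1 ≠ p.2} → ℝ),
        Continuous p₁ ∧ Continuous p₂ ∧ Continuous D ∧
        (∀ p : {p : ℕ × ℕ // p.1 ≠ p.2},
          p₁ (stoneCechUnit p) = stoneCechUnit p.1.1 ∧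
          p₂ (stoneCechUnit p) = stoneCechUnit p.1.2 ∧
          D (stoneCechUnit p) = d p.1.1 p.1.2) ∧
        ∃ ξ η : StoneCech ℕ, ∀ r ∈ Set.Icc (1/2 : ℝ) 1,
          ∃ ζ : StoneCech {p : ℕ × ℕ // p.1 ≠ p.2},
            p₁ ζ = ξ ∧ p₂ ζ = η ∧ D ζ = r ∧
            sSup {s : ℝ | ∃ (f : ℕ → ℝ) (F : StoneCech {p : ℕ × ℕ // p.1 ≠ p.2} → ℝ),
              (∀ x y, |f x - f y| ≤ d x y) ∧ f 1 = 0 ∧ Continuous F ∧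
              (∀ p : {p : ℕ × ℕ // p.1 ≠ p.2},
                F (stoneCechUnit p) = (f p.1.1 - f p.1.2) / d p.1.1 p.1.2) ∧
              s = |F ζ|} = 1 / (2 * r) := by
  classical
  refine ⟨dd, dd_self, dd_comm, dd_triangle, (fun x y h => dd_mem h),
    pr1, pr2, DD, continuous_pr1, continuous_pr2, continuous_DD,
    (fun t => ⟨pr1_unit t, pr2_unit t, DD_unit t⟩),
    xi, eta, ?_⟩
  intro r hr
  obtain ⟨ζ, h1, h2, h3⟩ := fiber hr
  obtain ⟨ζ₀, h10, h20, h30⟩ := fiber (show (1/2:ℝ) ∈ Set.Icc (1/2:ℝ) 1 by norm_num)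
  refine ⟨ζ, h1, h2, h3, ?_⟩
  have hrpos : (0:ℝ) < r := lt_of_lt_of_le (by norm_num) hr.1
  have hub : ∀ s ∈ {s : ℝ | ∃ (f : ℕ → ℝ) (F : StoneCech {p : ℕ × ℕ // p.1 ≠ p.2} → ℝ),
      (∀ x y, |f x - f y| ≤ dd x y) ∧ f 1 = 0 ∧ Continuous F ∧
      (∀ p : {p : ℕ × ℕ // p.1 ≠ p.2},
        F (stoneCechUnit p) = (f p.1.1 - f p.1.2) / dd p.1.1 p.1.2) ∧
      s = |F ζ|}, s ≤ 1/(2*r) := by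
    rintro s ⟨f, F, hLip, hf1, hFc, hFu, rfl⟩
    have hfb : ∀ x, f x ∈ Set.Icc (-1:ℝ) 1 := by
      intro x
      rcases eq_or_ne x 1 with rfl | hx
      · rw [hf1]; constructor <;> norm_num
      · have h := hLip x 1
        rw [hf1, sub_zero] at h
        exact abs_le.1 (h.trans (dd_mem hx).2)
    have key : (fun z => F z * DD z)
        = (fun z => ext01 f hfb (pr1 z) - ext01 f hfb (pr2 z)) := by
      apply denseRange_stoneCechUnit.equalizer (hFc.mul continuous_DD)
        (((continuous_ext01 f hfb).comp continuous_pr1).sub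
          ((continuous_ext01 f hfb).comp continuous_pr2))
      funext t
      simp only [Function.comp_apply, Pi.mul_apply, Pi.sub_apply]
      rw [hFu t, DD_unit t, pr1_unit t, pr2_unit t, ext01_unit, ext01_unit]
      rw [div_mul_cancel₀]
      exact ne_of_gt (lt_of_lt_of_le (by norm_num) (dd_mem t.prop).1)
    have hF1 : ∀ z, |F z| ≤ 1 := by
      intro z
      have hcl : closure (Set.range (stoneCechUnit :
          {p : ℕ × ℕ // p.1 ≠ p.2} → StoneCech {p : ℕ × ℕ // p.1 ≠ p.2}))
          ⊆ {z | |F z| ≤ 1} := by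
        apply closure_minimal
        · rintro _ ⟨t, rfl⟩
          show |F (stoneCechUnit t)| ≤ 1
          rw [hFu t, abs_div, abs_of_nonneg (dd_nonneg _ _)]
          exact div_le_one_of_le₀ (hLip _ _) (dd_nonneg _ _)
        · exact isClosed_le (continuous_abs.comp hFc) continuous_const
      exact hcl (by rw [denseRange_stoneCechUnit.closure_range]; trivial)
    have e1 : F ζ * r = ext01 f hfb xi - ext01 f hfb eta := by
      have hc := congrFun key ζ
      rwa [h3, h1, h2] at hc
    have e0 : F ζ₀ * (1/2) = ext01 f hfb xi - ext01 f hfb eta := by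
      have hc := congrFun key ζ₀
      rwa [h30, h10, h20] at hc
    have hXY : |ext01 f hfb xi - ext01 f hfb eta| ≤ 1/2 := by
      rw [← e0, abs_mul, abs_of_pos (show (0:ℝ) < 1/2 by norm_num)]
      nlinarith [hF1 ζ₀, abs_nonneg (F ζ₀)]
    have hFval : |F ζ| = |ext01 f hfb xi - ext01 f hfb eta| / r := by
      rw [← e1, abs_mul, abs_of_pos hrpos, mul_div_cancel_right₀ _ (ne_of_gt hrpos)]
    rw [hFval, show (1:ℝ)/(2*r) = (1/2)/r by ring]
    exact div_le_div_of_nonneg_right hXY hrpos.le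
  set f0 : ℕ → ℝ := fun x => if x % 2 = 0 then (1/2:ℝ) else 0 with hf0def
  have hdef0 : ∀ x : ℕ, f0 x ∈ Set.Icc (-1:ℝ) 1 := by
    intro x
    rw [hf0def]
    dsimp only
    split_ifs <;> constructor <;> norm_num
  have hxival : ext01 f0 hdef0 xi = 1/2 := by
    apply G_xi (continuous_ext01 _ _)
    intro p
    rw [ext01_unit]
    have : (2*p) % 2 = 0 := by omega
    simp [hf0def, this]
  have hetaval : ext01 f0 hdef0 eta = 0 := by
    apply G_eta (continuous_ext01 _ _)
    intro p
    rw [ext01_unit]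
    have : (2*p+1) % 2 = 1 := by omega
    simp [hf0def, this]
  set F0 : StoneCech {p : ℕ × ℕ // p.1 ≠ p.2} → ℝ :=
    fun z => (ext01 f0 hdef0 (pr1 z) - ext01 f0 hdef0 (pr2 z)) / DD z with hF0def
  have hF0c : Continuous F0 :=
    (((continuous_ext01 _ _).comp continuous_pr1).sub
      ((continuous_ext01 _ _).comp continuous_pr2)).div continuous_DD
      (fun z => ne_of_gt (DD_pos z))
  have hF0u : ∀ t : {p : ℕ × ℕ // p.1 ≠ p.2},
      F0 (stoneCechUnit t) = (f0 t.val.1 - f0 t.val.2) / dd t.val.1 t.val.2 := by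
    intro t
    rw [hF0def]
    dsimp only
    rw [pr1_unit, pr2_unit, ext01_unit, ext01_unit, DD_unit]
  have hmem : (1/(2*r)) ∈ {s : ℝ | ∃ (f : ℕ → ℝ) (F : StoneCech {p : ℕ × ℕ // p.1 ≠ p.2} → ℝ),
      (∀ x y, |f x - f y| ≤ dd x y) ∧ f 1 = 0 ∧ Continuous F ∧
      (∀ p : {p : ℕ × ℕ // p.1 ≠ p.2},
        F (stoneCechUnit p) = (f p.1.1 - f p.1.2) / dd p.1.1 p.1.2) ∧
      s = |F ζ|} := by
    refine ⟨f0, F0, ?_, ?_, hF0c, hF0u, ?_⟩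
    · intro x y
      rcases eq_or_ne x y with rfl | hxy
      · rw [dd_self]; simp
      · have hd := (dd_mem hxy).1
        have habs : |f0 x - f0 y| ≤ 1/2 := by
          rw [hf0def]
          dsimp only
          split_ifs <;> norm_num [abs_le]
        linarith
    · rw [hf0def]; norm_num
    · rw [hF0def]
      dsimp only
      rw [h1, h2, h3, hxival, hetaval, sub_zero, abs_div, abs_of_pos hrpos,
        abs_of_pos (show (0:ℝ) < 1/2 by norm_num)]
      ring
  exact le_antisymm (csSup_le ⟨_, hmem⟩ hub) (le_csSup ⟨1/(2*r), fun a ha => hub a ha⟩ hmem)
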